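/- arXiv:1604.05001 — 2 statements merged into one kernel-verified Lean document; each statement's English description precedes it below -/
import Mathlib

section
/- Let H ∈ ℂ^{n×m}, V ∈ ℂ^{m×d}, J positive definite Hermitian, and for U ∈ ℂ^{n×d} let E(U) = (I − U†HV)(I − U†HV)† + U†JU. Then max over U of log det(E(U)⁻¹), taken over U such that E(U) is invertible, equals log det(I + V†H†J⁻¹HV), and the maximum is attained at U* = (HVV†H† + J)⁻¹HV. -/
open Matrix ComplexOrder

private lemma one_le_det_one_add_psd {k : ℕ} {Q : Matrix (Fin k) (Fin k) ℂ}
    (hQ : Q.PosSemidef) : (1 : ℂ) ≤ (1 + Q).det := by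
  have hH := hQ.1
  set W : Matrix (Fin k) (Fin k) ℂ := (hH.eigenvectorUnitary : Matrix (Fin k) (Fin k) ℂ)
  have hWW : W * star W = 1 := mem_unitaryGroup_iff.mp hH.eigenvectorUnitary.2
  set D : Matrix (Fin k) (Fin k) ℂ := diagonal (RCLike.ofReal ∘ hH.eigenvalues)
  have key : (1 + Q).det = ∏ i, ((1 : ℂ) + (hH.eigenvalues i : ℂ)) := by
    have h1 : (1 : Matrix (Fin k) (Fin k) ℂ) + Q = W * (1 + D) * star W := by
      conv_lhs => rw [hH.spectral_theorem]
      rw [Unitary.conjStarAlgAut_apply]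
      rw [mul_add, add_mul, mul_one, hWW]
    rw [h1, det_mul_right_comm, hWW, one_mul]
    rw [show (1 : Matrix (Fin k) (Fin k) ℂ) + D
        = diagonal (fun i => (1 : ℂ) + (hH.eigenvalues i : ℂ)) by
      rw [← diagonal_one, diagonal_add]; rfl]
    rw [det_diagonal]
  rw [key]
  have h2 : ∏ _i : Fin k, (1:ℂ) ≤ ∏ i, ((1 : ℂ) + (hH.eigenvalues i : ℂ)) := by
    refine Finset.prod_le_prod (fun i _ => zero_le_one) (fun i _ => ?_)
    have h0 : (0:ℝ) ≤ hH.eigenvalues i := hQ.eigenvalues_nonneg i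
    have h0' : (0:ℂ) ≤ (hH.eigenvalues i : ℂ) := by
      rw [Complex.zero_le_real]; exact h0
    exact le_add_of_nonneg_right h0'
  simpa using h2

open scoped MatrixOrder in
private lemma det_le_det_add_psd {k : ℕ} {B P : Matrix (Fin k) (Fin k) ℂ}
    (hB : B.PosDef) (hP : P.PosSemidef) : B.det ≤ (B + P).det := by
  set R := CFC.sqrt B with hRdef
  have hRR : R * R = B := CFC.sqrt_mul_sqrt_self B hB.posSemidef.nonneg
  have hRH : R.IsHermitian := (CFC.sqrt_nonneg B).posSemidef.1
  have hBdet : B.det ≠ 0 := hB.det_pos.ne'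
  have hRdet : IsUnit R.det := by
    refine isUnit_iff_ne_zero.mpr fun h => hBdet ?_
    rw [← hRR, det_mul, h, zero_mul]
  have hRinv : R * R⁻¹ = 1 := mul_nonsing_inv R hRdet
  have hinvR : R⁻¹ * R = 1 := nonsing_inv_mul R hRdet
  set Q := R⁻¹ * P * R⁻¹ with hQdef
  have hQ : Q.PosSemidef := by
    have := hP.conjTranspose_mul_mul_same R⁻¹
    rwa [conjTranspose_nonsing_inv, hRH.eq] at this
  have hmid : R * (R⁻¹ * P * R⁻¹) * R = P := by
    calc R * (R⁻¹ * P * R⁻¹) * R = R * (R⁻¹ * (P * (R⁻¹ * R))) := by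
          simp only [mul_assoc]
      _ = P := by rw [hinvR, mul_one, ← mul_assoc, hRinv, one_mul]
  have hkey : B + P = R * (1 + Q) * R := by
    rw [mul_add, add_mul, mul_one, hRR, hQdef, hmid]
  have hdet : (B + P).det = B.det * (1 + Q).det := by
    rw [hkey, det_mul_right_comm, hRR, det_mul]
  rw [hdet]
  calc B.det = B.det * 1 := (mul_one _).symm
    _ ≤ B.det * (1 + Q).det :=
        mul_le_mul_of_nonneg_left (one_le_det_one_add_psd hQ) hB.det_pos.le

/-- The rate equals the maximum over linear receivers of `log det(E(U)⁻¹)`: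
with `E(U) = (I − U†HV)(I − U†HV)† + U†JU`, the maximum of
`log det(E(U)⁻¹)` over `U` with `E(U)` invertible equals
`log det(I + V†H†J⁻¹HV)`, attained at `U* = (HVV†H† + J)⁻¹HV`. -/
theorem rate_eq_max_logdet_inv_mse
    {n m d : ℕ} (H : Matrix (Fin n) (Fin m) ℂ) (V : Matrix (Fin m) (Fin d) ℂ)
    (J : Matrix (Fin n) (Fin n) ℂ) (hJ : J.PosDef) :
    (∀ U : Matrix (Fin n) (Fin d) ℂ,
      IsUnit ((1 - Uᴴ * (H * V)) * (1 - Uᴴ * (H * V))ᴴ + Uᴴ * J * U).det →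
      Real.log (((1 - Uᴴ * (H * V)) * (1 - Uᴴ * (H * V))ᴴ + Uᴴ * J * U)⁻¹).det.re ≤
        Real.log (1 + Vᴴ * Hᴴ * J⁻¹ * (H * V)).det.re) ∧
    (letI Ustar := (H * V * Vᴴ * Hᴴ + J)⁻¹ * (H * V)
     IsUnit ((1 - Ustarᴴ * (H * V)) * (1 - Ustarᴴ * (H * V))ᴴ + Ustarᴴ * J * Ustar).det ∧
     Real.log (((1 - Ustarᴴ * (H * V)) * (1 - Ustarᴴ * (H * V))ᴴ +
         Ustarᴴ * J * Ustar)⁻¹).det.re =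
       Real.log (1 + Vᴴ * Hᴴ * J⁻¹ * (H * V)).det.re) := by
  set A : Matrix (Fin n) (Fin d) ℂ := H * V with hAdef
  set S : Matrix (Fin n) (Fin n) ℂ := H * V * Vᴴ * Hᴴ + J with hSdef
  have hSA : S = A * Aᴴ + J := by
    rw [hSdef, hAdef, conjTranspose_mul]
    simp only [Matrix.mul_assoc]
  have hS : S.PosDef := by
    rw [hSA, add_comm]
    exact hJ.add_posSemidef (posSemidef_self_mul_conjTranspose A)
  have hSdet : IsUnit S.det := hS.det_pos.ne'.isUnit
  have hJdet : IsUnit J.det := hJ.det_pos.ne'.isUnit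
  set W : Matrix (Fin n) (Fin n) ℂ := S⁻¹ with hWdef
  have hSW : S * W = 1 := mul_nonsing_inv S hSdet
  have hWS : W * S = 1 := nonsing_inv_mul S hSdet
  have hWherm : Wᴴ = W := hS.isHermitian.inv.eq
  have hWpsd : W.PosSemidef := hS.inv.posSemidef
  set Ustar : Matrix (Fin n) (Fin d) ℂ := W * A with hUstardef
  set Emin : Matrix (Fin d) (Fin d) ℂ := 1 - Aᴴ * W * A with hEmindef
  set G : Matrix (Fin d) (Fin d) ℂ := 1 + Aᴴ * J⁻¹ * A with hGdef
  -- G * Emin = 1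
  have hJJ : J⁻¹ * J = 1 := nonsing_inv_mul J hJdet
  have hcancel : Aᴴ * J⁻¹ * (A * Aᴴ) * W * A = Aᴴ * J⁻¹ * A - Aᴴ * W * A := by
    have h0 : A * Aᴴ = S - J := by rw [hSA, add_sub_cancel_right]
    rw [h0, Matrix.mul_sub, Matrix.sub_mul, Matrix.sub_mul]
    rw [Matrix.mul_assoc (Aᴴ * J⁻¹) S W, hSW, Matrix.mul_one]
    rw [Matrix.mul_assoc Aᴴ J⁻¹ J, hJJ, Matrix.mul_one]
  have hGEmin : G * Emin = 1 := by
    have h2 : Aᴴ * J⁻¹ * A * (Aᴴ * W * A) = Aᴴ * J⁻¹ * A - Aᴴ * W * A := by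
      rw [← hcancel]; simp only [Matrix.mul_assoc]
    have h3 : G * (Aᴴ * W * A) = Aᴴ * J⁻¹ * A := by
      rw [hGdef, Matrix.add_mul, Matrix.one_mul, h2]; abel
    rw [hEmindef, Matrix.mul_sub, Matrix.mul_one, h3, hGdef]
    abel
  have hGinv : G⁻¹ = Emin := inv_eq_right_inv hGEmin
  have hG : G.PosDef := by
    rw [hGdef]
    exact Matrix.PosDef.one.add_posSemidef
      (hJ.inv.posSemidef.conjTranspose_mul_mul_same A)
  have hGdet : IsUnit G.det := hG.det_pos.ne'.isUnit
  have hEminPD : Emin.PosDef := by rw [← hGinv]; exact hG.inv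
  have hEmininv : Emin⁻¹ = G := by rw [← hGinv, nonsing_inv_nonsing_inv G hGdet]
  -- the completion-of-squares identity
  have keyE : ∀ U : Matrix (Fin n) (Fin d) ℂ,
      (1 - Uᴴ * A) * (1 - Uᴴ * A)ᴴ + Uᴴ * J * U
        = (U - Ustar)ᴴ * S * (U - Ustar) + Emin := by
    intro U
    have hSUstar : S * Ustar = A := by
      rw [hUstardef, ← Matrix.mul_assoc, hSW, Matrix.one_mul]
    have hUstarH : Ustarᴴ = Aᴴ * W := by
      rw [hUstardef, conjTranspose_mul, hWherm]
    have hUstarS : Ustarᴴ * S = Aᴴ := by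
      rw [hUstarH, Matrix.mul_assoc, hWS, Matrix.mul_one]
    have lhs_exp : (1 - Uᴴ * A) * (1 - Uᴴ * A)ᴴ + Uᴴ * J * U
        = 1 - Uᴴ * A - Aᴴ * U + (Uᴴ * A) * (Aᴴ * U) + Uᴴ * J * U := by
      rw [conjTranspose_sub, conjTranspose_mul, conjTranspose_one,
        conjTranspose_conjTranspose]
      rw [Matrix.sub_mul, Matrix.mul_sub, Matrix.mul_sub,
        Matrix.one_mul, Matrix.one_mul, Matrix.mul_one]
      abel
    have rhs_exp : (U - Ustar)ᴴ * S * (U - Ustar) + Emin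
        = Uᴴ * S * U - Uᴴ * A - Aᴴ * U + Aᴴ * W * A + (1 - Aᴴ * W * A) := by
      rw [conjTranspose_sub, Matrix.sub_mul, Matrix.sub_mul,
        Matrix.mul_sub, Matrix.mul_sub]
      rw [Matrix.mul_assoc Uᴴ S Ustar, hSUstar, hUstarS]
      have hUstarSUstar : Aᴴ * Ustar = Aᴴ * W * A := by
        rw [hUstardef, ← Matrix.mul_assoc]
      rw [hUstarSUstar, hEmindef]
      abel
    have hSU : Uᴴ * S * U = (Uᴴ * A) * (Aᴴ * U) + Uᴴ * J * U := by
      rw [hSA, Matrix.mul_add, Matrix.add_mul]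
      congr 1
      simp only [Matrix.mul_assoc]
    rw [lhs_exp, rhs_exp, hSU]
    abel
  -- positive-definiteness of E(U) and determinant bound
  have hEpos : ∀ U : Matrix (Fin n) (Fin d) ℂ,
      ((1 - Uᴴ * A) * (1 - Uᴴ * A)ᴴ + Uᴴ * J * U).PosDef := by
    intro U
    rw [keyE U, add_comm]
    exact hEminPD.add_posSemidef (hS.posSemidef.conjTranspose_mul_mul_same _)
  have hdetle : ∀ U : Matrix (Fin n) (Fin d) ℂ,
      Emin.det ≤ ((1 - Uᴴ * A) * (1 - Uᴴ * A)ᴴ + Uᴴ * J * U).det := by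
    intro U
    rw [keyE U, add_comm]
    exact det_le_det_add_psd hEminPD (hS.posSemidef.conjTranspose_mul_mul_same _)
  -- re/log bookkeeping
  have hre : ∀ {Z : Matrix (Fin d) (Fin d) ℂ}, Z.PosDef → (Z⁻¹).det.re = (Z.det.re)⁻¹ := by
    intro Z hZ
    have h1 : Z⁻¹.det = Z.det⁻¹ := by
      rw [det_nonsing_inv, Ring.inverse_eq_inv]
    have him : Z.det.im = 0 := by
      have := hZ.det_pos
      rw [Complex.lt_def] at this
      simpa using this.2.symm
    have hZre : Z.det = (Z.det.re : ℂ) := Complex.ext rfl (by simp [him])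
    have h2 : Z.det⁻¹ = ((Z.det.re)⁻¹ : ℂ) := by rw [hZre]; simp
    rw [h1, h2, ← Complex.ofReal_inv, Complex.ofReal_re]
  have hrepos : ∀ {Z : Matrix (Fin d) (Fin d) ℂ}, Z.PosDef → 0 < Z.det.re := by
    intro Z hZ
    have := hZ.det_pos
    rw [Complex.lt_def] at this
    simpa using this.1
  have hGform : 1 + Vᴴ * Hᴴ * J⁻¹ * (H * V) = G := by
    rw [hGdef, hAdef, conjTranspose_mul]
  have hGre : G.det.re = (Emin.det.re)⁻¹ := by
    rw [← hEmininv, hre hEminPD]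
  constructor
  · intro U _
    rw [hGform, hre (hEpos U), hGre]
    have hle : Emin.det.re ≤ ((1 - Uᴴ * A) * (1 - Uᴴ * A)ᴴ + Uᴴ * J * U).det.re :=
      (Complex.le_def.mp (hdetle U)).1
    rw [Real.log_inv, Real.log_inv]
    exact neg_le_neg (Real.log_le_log (hrepos hEminPD) hle)
  · refine ⟨?_, ?_⟩
    · exact (hEpos _).det_pos.ne'.isUnit
    · have hzero : (1 - ((W * A)ᴴ * A)) * (1 - (W * A)ᴴ * A)ᴴ + (W * A)ᴴ * J * (W * A)
          = Emin := by
        rw [keyE (W * A), ← hUstardef, sub_self, conjTranspose_zero,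
          Matrix.zero_mul, Matrix.zero_mul, zero_add]
      rw [hGform]
      show Real.log (((1 - (W * A)ᴴ * A) * (1 - (W * A)ᴴ * A)ᴴ
          + (W * A)ᴴ * J * (W * A))⁻¹).det.re = Real.log G.det.re
      rw [hzero, hEmininv]
end

section
/- The function (K_1, …, K_K) ↦ Σ_{k=1}^K α_k [log det(Σ_{j≥k} H_j K_j H_j† + Λ) − log det(Σ_{j>k} H_j K_j H_j† + Λ)] with weights 0 ≤ α_1 ≤ α_2 ≤ … ≤ α_K is concave on the product of positive semidefinite cones, where H_j are fixed complex matrices and Λ is a fixed positive definite Hermitian matrix. -/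
open Matrix ComplexOrder Finset

section Aux

lemma wsr_real_smul_eq {ι κ : Type*} (r : ℝ) (X : Matrix ι κ ℂ) :
    r • X = (r : ℂ) • X := by
  ext i j
  simp [Matrix.smul_apply, Complex.real_smul]

lemma wsr_posSemidef_real_smul {p : Type*} [Fintype p] {A : Matrix p p ℂ}
    (hA : A.PosSemidef) {r : ℝ} (hr : 0 ≤ r) : (r • A).PosSemidef := by
  rw [wsr_real_smul_eq]
  refine .of_dotProduct_mulVec_nonneg ?_ fun x => ?_
  · unfold Matrix.IsHermitian
    rw [conjTranspose_smul, Complex.star_def, Complex.conj_ofReal, hA.1.eq]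
  · rw [smul_mulVec, dotProduct_smul, smul_eq_mul]
    exact mul_nonneg (by simpa using hr) (hA.dotProduct_mulVec_nonneg x)

lemma wsr_posDef_conj {p : Type*} [Fintype p] [DecidableEq p]
    {B : Matrix p p ℂ} (hB : B.PosDef) {C : Matrix p p ℂ} (hC : IsUnit C.det) :
    (Cᴴ * B * C).PosDef := by
  refine .of_dotProduct_mulVec_pos (isHermitian_conjTranspose_mul_mul C hB.1) fun x hx => ?_
  have hCu : IsUnit C := (Matrix.isUnit_iff_isUnit_det _).mpr hC
  have hinj : Function.Injective C.mulVec := Matrix.mulVec_injective_iff_isUnit.mpr hCu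
  have hx' : C *ᵥ x ≠ 0 := fun h => hx (hinj (by simpa using h))
  simpa only [star_mulVec, dotProduct_mulVec, vecMul_vecMul] using hB.dotProduct_mulVec_pos hx'

lemma wsr_posDef_conj' {p : Type*} [Fintype p] [DecidableEq p]
    {B : Matrix p p ℂ} (hB : B.PosDef) {C : Matrix p p ℂ} (hC : IsUnit C.det) :
    (C * B * Cᴴ).PosDef := by
  have : IsUnit Cᴴ.det := by
    rw [Matrix.det_conjTranspose]; exact hC.star
  simpa only [conjTranspose_conjTranspose] using wsr_posDef_conj hB this

end Aux


open scoped MatrixOrder in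
lemma wsr_logdet_combo {n : ℕ} {A B : Matrix (Fin n) (Fin n) ℂ}
    (hA : A.PosDef) (hB : B.PosDef) {a b : ℝ}
    (ha : 0 ≤ a) (hb : 0 ≤ b) (hab : a + b = 1) :
    a * Real.log A.det.re + b * Real.log B.det.re ≤
      Real.log ((a • A + b • B).det.re) := by
  rcases ha.eq_or_lt with rfl | ha'
  · have hb1 : b = 1 := by linarith
    subst hb1; simp
  rcases hb.eq_or_lt with rfl | hb'
  · have ha1 : a = 1 := by linarith
    subst ha1; simp
  -- basic positivity facts
  have hdetA : (0 : ℂ) < A.det := hA.det_pos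
  have hdetB : (0 : ℂ) < B.det := hB.det_pos
  have hdA : A.det = ((A.det.re : ℝ) : ℂ) := by
    have him : A.det.im = 0 := by simpa using (Complex.lt_def.mp hdetA).2.symm
    exact Complex.ext (by simp) (by simp [him])
  have hdB : B.det = ((B.det.re : ℝ) : ℂ) := by
    have him : B.det.im = 0 := by simpa using (Complex.lt_def.mp hdetB).2.symm
    exact Complex.ext (by simp) (by simp [him])
  have hdAre : 0 < A.det.re := by simpa using (Complex.lt_def.mp hdetA).1
  have hdBre : 0 < B.det.re := by simpa using (Complex.lt_def.mp hdetB).1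
  -- square root of A
  set S : Matrix (Fin n) (Fin n) ℂ := CFC.sqrt A with hSdef
  have hSps : S.PosSemidef := Matrix.nonneg_iff_posSemidef.mp (CFC.sqrt_nonneg A)
  have hSh : Sᴴ = S := hSps.1
  have hSS : S * S = A := CFC.sqrt_mul_sqrt_self A (Matrix.nonneg_iff_posSemidef.mpr hA.posSemidef)
  have hdetS : S.det * S.det = A.det := by rw [← Matrix.det_mul, hSS]
  have hdetS0 : S.det ≠ 0 := by
    intro h
    rw [h, zero_mul] at hdetS
    exact hdetA.ne' hdetS.symm
  have hSu : IsUnit S.det := isUnit_iff_ne_zero.mpr hdetS0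
  -- M = S⁻¹ B S⁻¹
  have hTh : (S⁻¹)ᴴ = S⁻¹ := by
    rw [Matrix.conjTranspose_nonsing_inv, hSh]
  set M : Matrix (Fin n) (Fin n) ℂ := S⁻¹ * B * S⁻¹ with hMdef
  have hTu : IsUnit (S⁻¹).det := by
    rw [Matrix.det_nonsing_inv, Ring.inverse_eq_inv]
    exact isUnit_iff_ne_zero.mpr (inv_ne_zero hdetS0)
  have hM : M.PosDef := by
    have := wsr_posDef_conj' hB hTu
    rwa [hTh] at this
  -- eigenvalues of M
  set μ : Fin n → ℝ := hM.1.eigenvalues with hμdef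
  have hμpos : ∀ i, 0 < μ i := hM.eigenvalues_pos
  set U : Matrix (Fin n) (Fin n) ℂ := (hM.1.eigenvectorUnitary : Matrix (Fin n) (Fin n) ℂ) with hUdef
  have hU : U * star U = 1 := (Matrix.mem_unitaryGroup_iff).mp (hM.1.eigenvectorUnitary).2
  have hspec : M = U * Matrix.diagonal (RCLike.ofReal ∘ μ) * star U := hM.1.spectral_theorem
  -- the convex combination
  have hmain : (a : ℂ) • A + (b : ℂ) • B
      = S * ((a : ℂ) • 1 + (b : ℂ) • M) * S := by
    have h1 : S * M * S = B := by
      rw [hMdef]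
      simp only [Matrix.mul_assoc]
      rw [Matrix.nonsing_inv_mul _ hSu, Matrix.mul_one, ← Matrix.mul_assoc,
        Matrix.mul_nonsing_inv _ hSu, Matrix.one_mul]
    rw [Matrix.mul_add, Matrix.add_mul, mul_smul_comm, smul_mul_assoc,
      mul_smul_comm, smul_mul_assoc, Matrix.mul_one, hSS, h1]
  have hdcombo : ((a : ℂ) • A + (b : ℂ) • B).det
      = A.det * ((a : ℂ) • 1 + (b : ℂ) • M).det := by
    rw [hmain, Matrix.det_mul, Matrix.det_mul, ← hdetS]; ring
  -- determinant of a•1 + b•M via spectral theorem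
  have hC : (a : ℂ) • (1 : Matrix (Fin n) (Fin n) ℂ) + (b : ℂ) • M
      = U * ((a : ℂ) • 1 + (b : ℂ) • Matrix.diagonal (RCLike.ofReal ∘ μ)) * star U := by
    rw [Matrix.mul_add, Matrix.add_mul, mul_smul_comm, smul_mul_assoc,
      mul_smul_comm, smul_mul_assoc, Matrix.mul_one, hU, ← hspec]
  have hdiag : (a : ℂ) • (1 : Matrix (Fin n) (Fin n) ℂ)
      + (b : ℂ) • Matrix.diagonal (RCLike.ofReal ∘ μ)
      = Matrix.diagonal (fun i => ((a + b * μ i : ℝ) : ℂ)) := by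
    ext i j
    by_cases h : i = j
    · subst h
      simp [Matrix.diagonal_apply_eq, Matrix.one_apply_eq]
    · simp [Matrix.diagonal_apply_ne _ h, Matrix.one_apply_ne h]
  have hCd : ((a : ℂ) • (1 : Matrix (Fin n) (Fin n) ℂ) + (b : ℂ) • M).det
      = ((∏ i, (a + b * μ i) : ℝ) : ℂ) := by
    rw [hC, Matrix.det_mul_right_comm, hU, Matrix.one_mul, hdiag, Matrix.det_diagonal]
    push_cast
    rfl
  -- det M = product of eigenvalues
  have hMd : M.det = ((∏ i, μ i : ℝ) : ℂ) := by
    rw [hM.1.det_eq_prod_eigenvalues]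
    push_cast
    rfl
  have hMd2 : M.det * A.det = B.det := by
    rw [hMdef, Matrix.det_mul, Matrix.det_mul, Matrix.det_nonsing_inv, Ring.inverse_eq_inv, ← hdetS]
    field_simp
  have hp_pos : 0 < ∏ i, μ i := Finset.prod_pos fun i _ => hμpos i
  have hrel : (∏ i, μ i) * A.det.re = B.det.re := by
    have : ((∏ i, μ i : ℝ) : ℂ) * ((A.det.re : ℝ) : ℂ) = ((B.det.re : ℝ) : ℂ) := by
      rw [← hMd, ← hdA, ← hdB]; exact hMd2
    exact_mod_cast this
  -- real part of determinant of the combination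
  have hcombo_det : ((a : ℂ) • A + (b : ℂ) • B).det
      = ((A.det.re * ∏ i, (a + b * μ i) : ℝ) : ℂ) := by
    rw [hdcombo, hCd]
    conv_lhs => rw [hdA]
    rw [← Complex.ofReal_mul]
  have hcombo_re : (a • A + b • B).det.re = A.det.re * ∏ i, (a + b * μ i) := by
    rw [wsr_real_smul_eq, wsr_real_smul_eq, hcombo_det, Complex.ofReal_re]
  -- the AM-GM inequality on each eigenvalue
  have hfac_pos : ∀ i, 0 < a + b * μ i := fun i =>
    add_pos ha' (mul_pos hb' (hμpos i))
  have key : (∏ i, μ i) ^ b ≤ ∏ i, (a + b * μ i) := by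
    rw [← Real.finset_prod_rpow _ _ (fun i _ => (hμpos i).le)]
    refine Finset.prod_le_prod (fun i _ => Real.rpow_nonneg (hμpos i).le b) ?_
    intro i _
    have := Real.geom_mean_le_arith_mean2_weighted ha hb zero_le_one (hμpos i).le hab
    simpa using this
  have hμb_pos : 0 < (∏ i, μ i) ^ b := Real.rpow_pos_of_pos hp_pos b
  -- put everything together
  rw [hcombo_re]
  have step1 : Real.log (A.det.re * (∏ i, μ i) ^ b)
      ≤ Real.log (A.det.re * ∏ i, (a + b * μ i)) := by
    apply Real.log_le_log (by positivity)
    exact mul_le_mul_of_nonneg_left key hdAre.le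
  have step2 : Real.log (A.det.re * (∏ i, μ i) ^ b)
      = Real.log A.det.re + b * Real.log (∏ i, μ i) := by
    rw [Real.log_mul hdAre.ne' hμb_pos.ne', Real.log_rpow hp_pos]
  have step3 : a * Real.log A.det.re + b * Real.log B.det.re
      = Real.log A.det.re + b * Real.log (∏ i, μ i) := by
    rw [← hrel, Real.log_mul hp_pos.ne' hdAre.ne']
    linear_combination Real.log A.det.re * hab
  rw [step3, ← step2]
  exact step1

section Part2

variable {n m K : ℕ}

lemma wsr_P_posDef (H : Fin K → Matrix (Fin n) (Fin m) ℂ)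
    {Λ : Matrix (Fin n) (Fin n) ℂ} (hΛ : Λ.PosDef)
    (s : Finset (Fin K)) {Ks : Fin K → Matrix (Fin m) (Fin m) ℂ}
    (hKs : ∀ k, (Ks k).PosSemidef) :
    ((∑ j ∈ s, H j * Ks j * (H j)ᴴ) + Λ).PosDef := by
  have hsum : (∑ j ∈ s, H j * Ks j * (H j)ᴴ).PosSemidef := by
    refine Finset.sum_induction _ _ (fun a b ha hb => ha.add hb) Matrix.PosSemidef.zero ?_
    exact fun j _ => (hKs j).mul_mul_conjTranspose_same (H j)
  exact Matrix.PosDef.posSemidef_add hsum hΛ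

lemma wsr_P_affine (H : Fin K → Matrix (Fin n) (Fin m) ℂ)
    (Λ : Matrix (Fin n) (Fin n) ℂ) (s : Finset (Fin K))
    (X Y : Fin K → Matrix (Fin m) (Fin m) ℂ) {a b : ℝ} (hab : a + b = 1) :
    (∑ j ∈ s, H j * (a • X + b • Y) j * (H j)ᴴ) + Λ
      = a • ((∑ j ∈ s, H j * X j * (H j)ᴴ) + Λ)
        + b • ((∑ j ∈ s, H j * Y j * (H j)ᴴ) + Λ) := by
  have hΛ' : a • Λ + b • Λ = Λ := by rw [← add_smul, hab, one_smul]
  simp only [Pi.add_apply, Pi.smul_apply, Matrix.mul_add, Matrix.add_mul,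
    Matrix.mul_smul, Matrix.smul_mul, Finset.sum_add_distrib, smul_add, Finset.smul_sum]
  conv_lhs => rw [← hΛ']
  abel

lemma wsr_convex_set :
    Convex ℝ { Ks : Fin K → Matrix (Fin m) (Fin m) ℂ | ∀ k, (Ks k).PosSemidef } := by
  intro X hX Y hY a b ha hb hab k
  exact (wsr_posSemidef_real_smul (hX k) ha).add (wsr_posSemidef_real_smul (hY k) hb)

lemma wsr_G_concave (H : Fin K → Matrix (Fin n) (Fin m) ℂ)
    {Λ : Matrix (Fin n) (Fin n) ℂ} (hΛ : Λ.PosDef) (s : Finset (Fin K)) :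
    ConcaveOn ℝ { Ks : Fin K → Matrix (Fin m) (Fin m) ℂ | ∀ k, (Ks k).PosSemidef }
      (fun Ks => Real.log ((∑ j ∈ s, H j * Ks j * (H j)ᴴ) + Λ).det.re) := by
  refine ⟨wsr_convex_set, ?_⟩
  intro X hX Y hY a b ha hb hab
  have hPX := wsr_P_posDef H hΛ s hX
  have hPY := wsr_P_posDef H hΛ s hY
  have h := wsr_logdet_combo hPX hPY ha hb hab
  rw [← wsr_P_affine H Λ s X Y hab] at h
  simpa [smul_eq_mul] using h

lemma wsr_concaveOn_sum {ι E : Type*} [AddCommGroup E] [Module ℝ E]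
    {s : Set E} (hs : Convex ℝ s) (t : Finset ι) (f : ι → E → ℝ)
    (hf : ∀ i ∈ t, ConcaveOn ℝ s (f i)) :
    ConcaveOn ℝ s (fun x => ∑ i ∈ t, f i x) := by
  classical
  induction t using Finset.induction_on with
  | empty => simpa using concaveOn_const (0 : ℝ) hs
  | insert a t' h ih =>
    simp only [Finset.sum_insert h]
    exact (hf a (Finset.mem_insert_self a t')).add
      (ih fun i hi => hf i (Finset.mem_insert_of_mem hi))

lemma wsr_abel (a u : ℕ → ℝ) (N : ℕ) :
    ∑ k ∈ Finset.range N, a k * (u k - u (k + 1))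
      = (∑ k ∈ Finset.range N, (a k - if k = 0 then 0 else a (k - 1)) * u k)
        - (if N = 0 then 0 else a (N - 1)) * u N := by
  induction N with
  | zero => simp
  | succ N ih =>
    rw [Finset.sum_range_succ, Finset.sum_range_succ, ih]
    simp only [Nat.succ_ne_zero, if_false, Nat.add_sub_cancel]
    ring

end Part2
/-- Auxiliary: the `log det` functions indexed by a natural number cutoff. -/
noncomputable def wsrG {n m K : ℕ} (H : Fin K → Matrix (Fin n) (Fin m) ℂ)
    (Λ : Matrix (Fin n) (Fin n) ℂ) (t : ℕ)
    (Ks : Fin K → Matrix (Fin m) (Fin m) ℂ) : ℝ :=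
  Real.log ((∑ j ∈ Finset.univ.filter (fun j : Fin K => t ≤ (j : ℕ)),
    H j * Ks j * (H j)ᴴ) + Λ).det.re

/-- Auxiliary: the weights extended to `ℕ`. -/
def wsrAlpha {K : ℕ} (α : Fin K → ℝ) (t : ℕ) : ℝ :=
  if h : t < K then α ⟨t, h⟩ else 0

/-- Concavity of the weighted sum rate of the Gaussian vector multiple-access
channel with SIC decoding in order `1,…,K`: with weights
`0 ≤ α_1 ≤ … ≤ α_K`, the function
`(K_1,…,K_K) ↦ Σ_k α_k [log det(Σ_{j≥k} H_jK_jH_j† + Λ) − log det(Σ_{j>k} H_jK_jH_j† + Λ)]`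
is concave on the product of positive semidefinite cones. -/
theorem weighted_sum_rate_concave
    {n m K : ℕ} (H : Fin K → Matrix (Fin n) (Fin m) ℂ)
    (Λ : Matrix (Fin n) (Fin n) ℂ) (hΛ : Λ.PosDef)
    (α : Fin K → ℝ) (hα0 : ∀ k, 0 ≤ α k)
    (hαmono : ∀ k l : Fin K, k ≤ l → α k ≤ α l) :
    ConcaveOn ℝ
      { Ks : Fin K → Matrix (Fin m) (Fin m) ℂ | ∀ k, (Ks k).PosSemidef }
      (fun Ks : Fin K → Matrix (Fin m) (Fin m) ℂ =>
        ∑ k : Fin K, α k *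
          (Real.log (∑ j ∈ Finset.univ.filter (fun j : Fin K => k ≤ j),
              H j * Ks j * (H j)ᴴ + Λ).det.re -
           Real.log (∑ j ∈ Finset.univ.filter (fun j : Fin K => k < j),
              H j * Ks j * (H j)ᴴ + Λ).det.re)) := by
  classical
  have hset : Convex ℝ
      { Ks : Fin K → Matrix (Fin m) (Fin m) ℂ | ∀ k, (Ks k).PosSemidef } := wsr_convex_set
  have hfun : (fun Ks : Fin K → Matrix (Fin m) (Fin m) ℂ =>
        ∑ k : Fin K, α k *
          (Real.log (∑ j ∈ Finset.univ.filter (fun j : Fin K => k ≤ j),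
              H j * Ks j * (H j)ᴴ + Λ).det.re -
           Real.log (∑ j ∈ Finset.univ.filter (fun j : Fin K => k < j),
              H j * Ks j * (H j)ᴴ + Λ).det.re))
      = fun Ks => (∑ t ∈ Finset.range K,
            (wsrAlpha α t - if t = 0 then 0 else wsrAlpha α (t - 1)) * wsrG H Λ t Ks)
          - (if K = 0 then 0 else wsrAlpha α (K - 1)) * wsrG H Λ K Ks := by
    funext Ks
    have h1 : ∑ k : Fin K, α k *
          (Real.log (∑ j ∈ Finset.univ.filter (fun j : Fin K => k ≤ j),
              H j * Ks j * (H j)ᴴ + Λ).det.re -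
           Real.log (∑ j ∈ Finset.univ.filter (fun j : Fin K => k < j),
              H j * Ks j * (H j)ᴴ + Λ).det.re)
        = ∑ k : Fin K,
            wsrAlpha α (k : ℕ) * (wsrG H Λ (k : ℕ) Ks - wsrG H Λ ((k : ℕ) + 1) Ks) := by
      refine Finset.sum_congr rfl fun k _ => ?_
      have e1 : wsrAlpha α (k : ℕ) = α k := by
        unfold wsrAlpha
        rw [dif_pos k.isLt, Fin.eta]
      have e2 : Finset.univ.filter (fun j : Fin K => k ≤ j)
          = Finset.univ.filter (fun j : Fin K => (k : ℕ) ≤ (j : ℕ)) := by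
        exact Finset.filter_congr fun j _ => Fin.le_def
      have e3 : Finset.univ.filter (fun j : Fin K => k < j)
          = Finset.univ.filter (fun j : Fin K => (k : ℕ) + 1 ≤ (j : ℕ)) := by
        refine Finset.filter_congr fun j _ => ?_
        simp only [Fin.lt_def]
        omega
      unfold wsrG
      rw [e1, e2, e3]
    rw [h1, Fin.sum_univ_eq_sum_range
        (fun t => wsrAlpha α t * (wsrG H Λ t Ks - wsrG H Λ (t + 1) Ks)) K,
      wsr_abel (wsrAlpha α) (fun t => wsrG H Λ t Ks) K]
  rw [hfun]
  have hGconc : ∀ t : ℕ,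
      ConcaveOn ℝ { Ks : Fin K → Matrix (Fin m) (Fin m) ℂ | ∀ k, (Ks k).PosSemidef }
        (wsrG H Λ t) :=
    fun t => wsr_G_concave H hΛ _
  have hA : ConcaveOn ℝ
      { Ks : Fin K → Matrix (Fin m) (Fin m) ℂ | ∀ k, (Ks k).PosSemidef }
      (fun Ks => ∑ t ∈ Finset.range K,
        (wsrAlpha α t - if t = 0 then 0 else wsrAlpha α (t - 1)) * wsrG H Λ t Ks) := by
    refine wsr_concaveOn_sum hset _ _ fun t ht => ?_
    have htK := Finset.mem_range.mp ht
    have hc : 0 ≤ wsrAlpha α t - (if t = 0 then 0 else wsrAlpha α (t - 1)) := by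
      rcases Nat.eq_zero_or_pos t with rfl | hpos
      · rw [if_pos rfl, sub_zero]
        unfold wsrAlpha
        rw [dif_pos htK]
        exact hα0 _
      · have ht1 : t - 1 < K := lt_of_le_of_lt (Nat.sub_le t 1) htK
        rw [if_neg (Nat.pos_iff_ne_zero.mp hpos)]
        unfold wsrAlpha
        rw [dif_pos htK, dif_pos ht1]
        refine sub_nonneg.mpr (hαmono ⟨t - 1, ht1⟩ ⟨t, htK⟩ ?_)
        simp only [Fin.le_def]
        omega
    exact (hGconc t).smul hc
  have hB : ConvexOn ℝ
      { Ks : Fin K → Matrix (Fin m) (Fin m) ℂ | ∀ k, (Ks k).PosSemidef }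
      (fun Ks => (if K = 0 then 0 else wsrAlpha α (K - 1)) * wsrG H Λ K Ks) := by
    have hconst : (fun Ks : Fin K → Matrix (Fin m) (Fin m) ℂ =>
          (if K = 0 then 0 else wsrAlpha α (K - 1)) * wsrG H Λ K Ks)
        = fun _ => (if K = 0 then 0 else wsrAlpha α (K - 1)) * Real.log (Λ.det.re) := by
      funext Ks
      have hempty : Finset.univ.filter (fun j : Fin K => K ≤ (j : ℕ)) = ∅ := by
        refine Finset.filter_false_of_mem fun j _ => ?_
        have := j.isLt
        omega
      unfold wsrG
      rw [hempty]
      simp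
    rw [hconst]
    exact convexOn_const _ hset
  exact hA.sub hB
end
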